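/- Let X = Y + Z where Y ∈ ℝ^{n×d} has rank k and the row space of Y is orthogonal to the row space of Z. Let V and V̂ be the top-k right singular subspaces of Y and X respectively. If σ_k(Y)² ≥ 2‖Z‖², then ‖Π_V − Π_{V̂}‖_F ≤ 2√2·‖Z‖_F/σ_k(Y). -/

import Mathlib

open MeasureTheory Finset
open scoped RealInnerProductSpace

noncomputable section
open Classical

/-- Frobenius norm of a real matrix. -/
def frobNorm {I J : Type*} [Fintype I] [Fintype J] (A : Matrix I J ℝ) : ℝ :=
  Real.sqrt (∑ i, ∑ j, (A i j) ^ 2)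

/-- Euclidean norm of a vector in `ℝ^d`. -/
def norm2 {I : Type*} [Fintype I] (v : I → ℝ) : ℝ := Real.sqrt (∑ j, (v j) ^ 2)

namespace Aux
open Matrix
variable {I J : Type*} [Fintype I] [Fintype J]

def F2 (A : Matrix I J ℝ) : ℝ := ∑ i, ∑ j, (A i j) ^ 2

lemma F2_nonneg (A : Matrix I J ℝ) : 0 ≤ F2 A :=
  Finset.sum_nonneg fun _ _ => Finset.sum_nonneg fun _ _ => sq_nonneg _

lemma frobNorm_eq (A : Matrix I J ℝ) : frobNorm A = Real.sqrt (F2 A) := rfl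

lemma frobNorm_nonneg (A : Matrix I J ℝ) : 0 ≤ frobNorm A := Real.sqrt_nonneg _

lemma frobNorm_sq (A : Matrix I J ℝ) : frobNorm A ^ 2 = F2 A := by
  rw [frobNorm_eq, Real.sq_sqrt (F2_nonneg A)]

lemma F2_eq_trace [DecidableEq I] (A : Matrix I J ℝ) : F2 A = Matrix.trace (A * Aᵀ) := by
  simp [F2, Matrix.trace, Matrix.diag, Matrix.mul_apply, sq]

lemma F2_eq_zero {A : Matrix I J ℝ} (h : F2 A = 0) : A = 0 := by
  ext i j
  have h1 : ∀ i ∈ Finset.univ (α := I), (0:ℝ) ≤ ∑ j, (A i j)^2 :=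
    fun _ _ => Finset.sum_nonneg fun _ _ => sq_nonneg _
  have h2 := (Finset.sum_eq_zero_iff_of_nonneg h1).1 h i (Finset.mem_univ i)
  have h3 := (Finset.sum_eq_zero_iff_of_nonneg (fun _ _ => sq_nonneg _)).1 h2 j (Finset.mem_univ j)
  simpa using pow_eq_zero_iff (n := 2) (by norm_num) |>.1 h3

lemma frob_mono {A B : Matrix I J ℝ} (h : F2 A ≤ F2 B) : frobNorm A ≤ frobNorm B :=
  Real.sqrt_le_sqrt h

lemma F2_le_of_frob {A B : Matrix I J ℝ} (h : frobNorm A ≤ frobNorm B) : F2 A ≤ F2 B := by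
  rw [← frobNorm_sq A, ← frobNorm_sq B]
  exact pow_le_pow_left₀ (frobNorm_nonneg A) h 2

lemma pyth (M : Matrix I J ℝ) {P : Matrix J J ℝ} (hPt : Pᵀ = P) (hPi : P * P = P) :
    F2 M = F2 (M * P) + F2 (M - M * P) := by
  classical
  rw [F2_eq_trace, F2_eq_trace, F2_eq_trace, ← Matrix.trace_add]
  congr 1
  have h1 : P * (P * Mᵀ) = P * Mᵀ := by rw [← Matrix.mul_assoc, hPi]
  simp only [Matrix.transpose_mul, hPt, Matrix.transpose_sub, Matrix.sub_mul, Matrix.mul_sub,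
    Matrix.mul_assoc, h1]
  abel

lemma F2_mul_le (M : Matrix I J ℝ) {P : Matrix J J ℝ} (hPt : Pᵀ = P) (hPi : P * P = P) :
    F2 (M * P) ≤ F2 M := by
  have h := pyth M hPt hPi
  have h2 := F2_nonneg (M - M * P)
  linarith

lemma frob_triangle (M N : Matrix I J ℝ) : frobNorm (M + N) ≤ frobNorm M + frobNorm N := by
  classical
  have hM : ∀ (A : Matrix I J ℝ), F2 A = ∑ p : I × J, (A p.1 p.2)^2 := by
    intro A; rw [F2]; exact (Fintype.sum_prod_type (f := fun p => A p.1 p.2 ^ 2)).symm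
  have hcs : ∑ p : I × J, (M p.1 p.2) * (N p.1 p.2) ≤ frobNorm M * frobNorm N := by
    have h := Real.sum_mul_le_sqrt_mul_sqrt (Finset.univ : Finset (I × J))
      (fun p => M p.1 p.2) (fun p => N p.1 p.2)
    calc ∑ p : I × J, (M p.1 p.2) * (N p.1 p.2) ≤ _ := h
    _ = frobNorm M * frobNorm N := by
        show Real.sqrt _ * Real.sqrt _ = Real.sqrt (F2 M) * Real.sqrt (F2 N)
        rw [hM M, hM N]
  have hexp : F2 (M + N) = F2 M + 2 * (∑ p : I × J, (M p.1 p.2) * (N p.1 p.2)) + F2 N := by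
    simp only [hM]
    have h : ∀ p : I × J, ((M + N) p.1 p.2)^2
        = M p.1 p.2^2 + 2*(M p.1 p.2 * N p.1 p.2) + N p.1 p.2^2 := by
      intro p; simp [Matrix.add_apply]; ring
    simp only [h, Finset.sum_add_distrib, Finset.mul_sum]
  have hle : F2 (M + N) ≤ (frobNorm M + frobNorm N)^2 := by
    have hM2 : frobNorm M ^ 2 = F2 M := frobNorm_sq M
    have hN2 : frobNorm N ^ 2 = F2 N := frobNorm_sq N
    nlinarith [hexp, hcs]
  calc frobNorm (M + N) = Real.sqrt (F2 (M + N)) := rfl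
  _ ≤ Real.sqrt ((frobNorm M + frobNorm N)^2) := Real.sqrt_le_sqrt hle
  _ = frobNorm M + frobNorm N :=
      Real.sqrt_sq (by have := frobNorm_nonneg M; have := frobNorm_nonneg N; linarith)

lemma frob_neg (M : Matrix I J ℝ) : frobNorm (-M) = frobNorm M := by
  rw [frobNorm_eq, frobNorm_eq]
  congr 1
  simp [F2]

lemma norm2_nonneg (v : I → ℝ) : 0 ≤ norm2 v := Real.sqrt_nonneg _

lemma norm2_sq (v : I → ℝ) : norm2 v ^ 2 = ∑ j, (v j)^2 :=
  Real.sq_sqrt (Finset.sum_nonneg fun _ _ => sq_nonneg _)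

lemma norm2_eq_zero_iff {v : I → ℝ} : norm2 v = 0 ↔ v = 0 := by
  constructor
  · intro h
    have h2 : ∑ j, (v j)^2 = 0 := by
      have h3 := norm2_sq v; rw [h] at h3; simpa using h3.symm
    funext j
    have h4 := (Finset.sum_eq_zero_iff_of_nonneg (fun _ _ => sq_nonneg (v _))).1 h2 j
      (Finset.mem_univ j)
    simpa using pow_eq_zero_iff (n := 2) (by norm_num) |>.1 h4
  · rintro rfl; simp [norm2]

lemma norm2_pos {v : I → ℝ} (h : v ≠ 0) : 0 < norm2 v :=
  lt_of_le_of_ne (norm2_nonneg v) fun h0 => h (norm2_eq_zero_iff.1 h0.symm)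

lemma norm2_smul (a : ℝ) (v : I → ℝ) : norm2 (a • v) = |a| * norm2 v := by
  rw [norm2, norm2]
  have h : ∀ j, ((a • v) j)^2 = a^2 * (v j)^2 := by intro j; simp [mul_pow]
  simp only [h, ← Finset.mul_sum]
  rw [Real.sqrt_mul (sq_nonneg a), Real.sqrt_sq_eq_abs]

lemma dp_le_norm2_mul_norm2 (v w : I → ℝ) : v ⬝ᵥ w ≤ norm2 v * norm2 w := by
  rw [dotProduct, norm2, norm2]
  exact Real.sum_mul_le_sqrt_mul_sqrt _ _ _

lemma dp_mulVec_left (A : Matrix I J ℝ) (x : J → ℝ) (y : I → ℝ) :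
    A.mulVec x ⬝ᵥ y = x ⬝ᵥ Aᵀ.mulVec y := by
  rw [dotProduct_comm, Matrix.dotProduct_mulVec, Matrix.mulVec_transpose, dotProduct_comm]

lemma norm2_mulVec_le {P : Matrix I I ℝ} (hPt : Pᵀ = P) (hPi : P * P = P) (w : I → ℝ) :
    norm2 (P.mulVec w) ≤ norm2 w := by
  set a := P.mulVec w with ha
  have hdp : a ⬝ᵥ a = w ⬝ᵥ a := by
    rw [ha, dp_mulVec_left, hPt, Matrix.mulVec_mulVec, hPi]
  have h1 : norm2 a ^ 2 ≤ norm2 w * norm2 a := by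
    rw [norm2_sq]
    calc ∑ j, (a j)^2 = a ⬝ᵥ a := by
          rw [dotProduct]; exact Finset.sum_congr rfl fun j _ => sq (a j)
    _ = w ⬝ᵥ a := hdp
    _ ≤ norm2 w * norm2 a := dp_le_norm2_mul_norm2 w a
  rcases eq_or_lt_of_le (norm2_nonneg a) with h0 | h0
  · rw [← h0]; exact norm2_nonneg w
  · nlinarith [h1, h0]

lemma F2_eq_sum_cols (A : Matrix I J ℝ) : F2 A = ∑ j, norm2 (fun i => A i j) ^ 2 := by
  rw [F2, Finset.sum_comm]
  exact Finset.sum_congr rfl fun j _ => (norm2_sq _).symm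

end Aux

namespace Aux
open Matrix
variable {d : ℕ}

def φe (d : ℕ) : EuclideanSpace ℝ (Fin d) ≃ₗ[ℝ] (Fin d → ℝ) := WithLp.linearEquiv 2 ℝ (Fin d → ℝ)

lemma dp_eq_inner (a b : EuclideanSpace ℝ (Fin d)) : (φe d a) ⬝ᵥ (φe d b) = (inner ℝ a b : ℝ) := by
  rw [PiLp.inner_apply, dotProduct]
  simp only [RCLike.inner_apply, starRingEnd_apply, star_trivial]
  exact Finset.sum_congr rfl fun i _ => mul_comm _ _

/-- The orthogonal projection onto a submodule, as a linear map on plain `Fin d → ℝ`. -/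
def projL (U : Submodule ℝ (Fin d → ℝ)) : (Fin d → ℝ) →ₗ[ℝ] (Fin d → ℝ) :=
  ((φe d).toLinearMap.comp
    ((U.comap (φe d).toLinearMap).subtype.comp
      (Submodule.orthogonalProjectionOnto (U.comap (φe d).toLinearMap)).toLinearMap)).comp
    (φe d).symm.toLinearMap

lemma projL_mem (U : Submodule ℝ (Fin d → ℝ)) (x : Fin d → ℝ) : projL U x ∈ U := by
  have h := (Submodule.orthogonalProjectionOnto (U.comap (φe d).toLinearMap) ((φe d).symm x)).2
  exact Submodule.mem_comap.1 h

lemma projL_id (U : Submodule ℝ (Fin d → ℝ)) {x : Fin d → ℝ} (hx : x ∈ U) : projL U x = x := by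
  have hmem : (φe d).symm x ∈ U.comap (φe d).toLinearMap := by
    simp [Submodule.mem_comap]
    show (φe d) ((φe d).symm x) ∈ U
    simpa using hx
  have h : (Submodule.orthogonalProjectionOnto (U.comap (φe d).toLinearMap) ((φe d).symm x)
      : EuclideanSpace ℝ (Fin d)) = (φe d).symm x :=
    Submodule.starProjection_eq_self_iff.2 hmem
  simp [projL, h]

lemma projL_symm (U : Submodule ℝ (Fin d → ℝ)) (x y : Fin d → ℝ) :
    (projL U x) ⬝ᵥ y = x ⬝ᵥ (projL U y) := by
  have h1 : projL U x = φe d ((U.comap (φe d).toLinearMap).subtype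
      ((Submodule.orthogonalProjectionOnto (U.comap (φe d).toLinearMap)) ((φe d).symm x))) := rfl
  have h2 : projL U y = φe d ((U.comap (φe d).toLinearMap).subtype
      ((Submodule.orthogonalProjectionOnto (U.comap (φe d).toLinearMap)) ((φe d).symm y))) := rfl
  have hx : x = φe d ((φe d).symm x) := by simp
  have hy : y = φe d ((φe d).symm y) := by simp
  rw [h1, h2]
  nth_rewrite 1 [hy]
  nth_rewrite 2 [hx]
  rw [dp_eq_inner, dp_eq_inner]
  exact Submodule.inner_starProjection_left_eq_right _ _ _

def projMat (U : Submodule ℝ (Fin d → ℝ)) : Matrix (Fin d) (Fin d) ℝ :=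
  LinearMap.toMatrix' (projL U)

lemma projMat_mulVec (U : Submodule ℝ (Fin d → ℝ)) (v : Fin d → ℝ) :
    (projMat U) *ᵥ v = projL U v := by
  rw [projMat, ← Matrix.toLin'_apply, Matrix.toLin'_toMatrix']

lemma matrix_ext_of_mulVec {A B : Matrix (Fin d) (Fin d) ℝ}
    (h : ∀ v, A *ᵥ v = B *ᵥ v) : A = B := by
  ext i j
  have h2 := congrFun (h (Pi.single j 1)) i
  rwa [Matrix.mulVec_single_one, Matrix.mulVec_single_one] at h2

lemma entry_eq_dp (A : Matrix (Fin d) (Fin d) ℝ) (i j : Fin d) :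
    A i j = (A *ᵥ Pi.single j 1) ⬝ᵥ Pi.single i 1 := by
  rw [Matrix.mulVec_single_one, dotProduct_single_one]
  rfl

lemma projMat_transpose (U : Submodule ℝ (Fin d → ℝ)) : (projMat U)ᵀ = projMat U := by
  ext i j
  show projMat U j i = projMat U i j
  rw [entry_eq_dp (projMat U) j i, entry_eq_dp (projMat U) i j, projMat_mulVec, projMat_mulVec,
    projL_symm, dotProduct_comm]

lemma projMat_idem (U : Submodule ℝ (Fin d → ℝ)) : projMat U * projMat U = projMat U := by
  apply matrix_ext_of_mulVec
  intro v
  rw [← Matrix.mulVec_mulVec, projMat_mulVec, projMat_mulVec]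
  exact projL_id U (projL_mem U v)

lemma projMat_rank (U : Submodule ℝ (Fin d → ℝ)) : (projMat U).rank = Module.finrank ℝ U := by
  have hrange : LinearMap.range (projMat U).mulVecLin = U := by
    apply le_antisymm
    · rintro x ⟨v, rfl⟩
      rw [Matrix.mulVecLin_apply, projMat_mulVec]
      exact projL_mem U v
    · intro x hx
      exact ⟨x, by rw [Matrix.mulVecLin_apply, projMat_mulVec, projL_id U hx]⟩
  rw [Matrix.rank, hrange]

lemma trace_eq_rank {P : Matrix (Fin d) (Fin d) ℝ} (hPi : P * P = P) :
    Matrix.trace P = (P.rank : ℝ) := by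
  have hff : ∀ x, P.mulVecLin (P.mulVecLin x) = P.mulVecLin x := by
    intro x
    have h := congrFun (congrArg DFunLike.coe (Matrix.mulVecLin_mul P P)) x
    rw [hPi] at h
    exact h.symm
  have hproj : LinearMap.IsProj (LinearMap.range P.mulVecLin) P.mulVecLin := by
    refine ⟨fun x => ⟨x, rfl⟩, ?_⟩
    rintro x ⟨y, rfl⟩
    exact hff y
  have htr := hproj.trace
  have hmat : LinearMap.trace ℝ (Fin d → ℝ) P.mulVecLin = Matrix.trace P := by
    rw [LinearMap.trace_eq_matrix_trace ℝ (Pi.basisFun ℝ (Fin d))]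
    congr 1
    rw [← Matrix.toLin'_apply' P]
    rw [show LinearMap.toMatrix (Pi.basisFun ℝ (Fin d)) (Pi.basisFun ℝ (Fin d))
        = LinearMap.toMatrix' from LinearMap.toMatrix_eq_toMatrix']
    exact LinearMap.toMatrix'_toLin' P
  rw [← hmat, htr]
  rfl

end Aux


namespace Aux
open Matrix
variable {n d k : ℕ}

lemma norm2_eq_sqrt_dp {I : Type*} [Fintype I] (v : I → ℝ) :
    norm2 v = Real.sqrt (v ⬝ᵥ v) := by
  rw [norm2, dotProduct]; congr 1; exact Finset.sum_congr rfl fun j _ => sq (v j)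

lemma continuous_norm2 : Continuous (norm2 : (Fin d → ℝ) → ℝ) := by
  unfold norm2
  apply Real.continuous_sqrt.comp
  exact continuous_finset_sum _ fun j _ => (continuous_apply j).pow 2

lemma exists_min_unit (U : Submodule ℝ (Fin d → ℝ)) (Y : Matrix (Fin n) (Fin d) ℝ)
    (hne : ∃ v ∈ U, norm2 v = 1) :
    ∃ v₀ ∈ U, norm2 v₀ = 1 ∧ ∀ v ∈ U, norm2 v = 1 → norm2 (Y *ᵥ v₀) ≤ norm2 (Y *ᵥ v) := by
  set S : Set (Fin d → ℝ) := {v | v ∈ U ∧ norm2 v = 1} with hS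
  have hf_cont : Continuous (fun v : Fin d → ℝ => norm2 (Y *ᵥ v)) := by
    apply continuous_norm2.comp
    exact LinearMap.continuous_of_finiteDimensional (Y.mulVecLin)
  have hS_closed : IsClosed S := by
    have h1 : IsClosed (U : Set (Fin d → ℝ)) := Submodule.closed_of_finiteDimensional U
    have h2 : IsClosed {v : Fin d → ℝ | norm2 v = 1} :=
      isClosed_eq continuous_norm2 continuous_const
    exact h1.inter h2
  have hS_sub : S ⊆ Metric.closedBall 0 1 := by
    rintro v ⟨hvU, hv1⟩
    rw [Metric.mem_closedBall, dist_zero_right]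
    rw [pi_norm_le_iff_of_nonneg (by norm_num : (0:ℝ) ≤ 1)]
    intro i
    rw [Real.norm_eq_abs, ← Real.sqrt_sq_eq_abs]
    rw [← hv1, norm2]
    apply Real.sqrt_le_sqrt
    exact Finset.single_le_sum (f := fun j => (v j)^2) (fun j _ => sq_nonneg _)
      (Finset.mem_univ i)
  have hS_compact : IsCompact S :=
    (isCompact_closedBall (0 : Fin d → ℝ) 1).of_isClosed_subset hS_closed hS_sub
  obtain ⟨u₁, hu₁⟩ := hne
  have hS_ne : S.Nonempty := ⟨u₁, hu₁.1, hu₁.2⟩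
  obtain ⟨v₀, hv₀S, hmin⟩ := hS_compact.exists_isMinOn hS_ne hf_cont.continuousOn
  exact ⟨v₀, hv₀S.1, hv₀S.2, fun v hvU hv1 => hmin ⟨hvU, hv1⟩⟩

/-- Courant–Fischer upper bound. -/
lemma courant_aux (Y : Matrix (Fin n) (Fin d) ℝ)
    (PV : Matrix (Fin d) (Fin d) ℝ) (hPVt : PVᵀ = PV) (hPVi : PV * PV = PV)
    (hYPV : Y * PV = Y) (U : Submodule ℝ (Fin d → ℝ))
    (hPVmem : ∀ v, PV *ᵥ v ∈ U) (hUfin : Module.finrank ℝ U = k)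
    (hSetU_ne : {s | ∃ v ∈ U, norm2 v = 1 ∧ s = norm2 (Y.mulVec v)}.Nonempty)
    (hs₀_nonneg : 0 ≤ sInf {s | ∃ v ∈ U, norm2 v = 1 ∧ s = norm2 (Y.mulVec v)})
    (E : Submodule ℝ (Fin d → ℝ)) (hEfin : Module.finrank ℝ E = k) :
    sInf {s | ∃ v ∈ E, norm2 v = 1 ∧ s = norm2 (Y.mulVec v)}
      ≤ sInf {s | ∃ v ∈ U, norm2 v = 1 ∧ s = norm2 (Y.mulVec v)} := by
  classical
  set SetU : Set ℝ := {s | ∃ v ∈ U, norm2 v = 1 ∧ s = norm2 (Y.mulVec v)}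
  set SetE : Set ℝ := {s | ∃ v ∈ E, norm2 v = 1 ∧ s = norm2 (Y.mulVec v)} with hSetE
  have hbddE : BddBelow SetE := ⟨0, by rintro s ⟨v, _, _, rfl⟩; exact norm2_nonneg _⟩
  set ψ : E →ₗ[ℝ] U := LinearMap.codRestrict U ((PV.mulVecLin).comp E.subtype)
    (fun x => hPVmem x) with hψ
  by_cases hinj : Function.Injective ψ
  · have hsurj : Function.Surjective ψ := by
      rw [← LinearMap.range_eq_top]
      apply Submodule.eq_top_of_finrank_eq
      rw [LinearMap.finrank_range_of_inj hinj, hEfin, hUfin]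
    apply le_csInf hSetU_ne
    rintro b ⟨v, hvU, hv1, rfl⟩
    obtain ⟨w, hw⟩ := hsurj ⟨v, hvU⟩
    have hwv : PV *ᵥ (w : Fin d → ℝ) = v := congrArg Subtype.val hw
    have hnw : (1:ℝ) ≤ norm2 (w : Fin d → ℝ) := by
      have h1 := norm2_mulVec_le hPVt hPVi (w : Fin d → ℝ)
      rw [hwv, hv1] at h1
      exact h1
    have hw0 : (w : Fin d → ℝ) ≠ 0 := by
      intro h0
      rw [h0, norm2_eq_zero_iff.2 rfl] at hnw
      linarith
    have hpos := norm2_pos hw0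
    set u : Fin d → ℝ := (norm2 (w : Fin d → ℝ))⁻¹ • (w : Fin d → ℝ) with hu
    have huE : u ∈ E := E.smul_mem _ w.2
    have hu1 : norm2 u = 1 := by
      rw [hu, norm2_smul, abs_inv, abs_of_pos hpos, inv_mul_cancel₀ hpos.ne']
    have hYw : Y *ᵥ (w : Fin d → ℝ) = Y *ᵥ v := by
      rw [← hwv, Matrix.mulVec_mulVec, hYPV]
    have hYu : norm2 (Y *ᵥ u) ≤ norm2 (Y *ᵥ v) := by
      rw [hu, Matrix.mulVec_smul, norm2_smul, abs_inv, abs_of_pos hpos, hYw]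
      have h2 := norm2_nonneg (Y *ᵥ v)
      have h3 : (norm2 (w : Fin d → ℝ))⁻¹ ≤ 1 := by
        rw [inv_le_one_iff₀]; right; exact hnw
      nlinarith
    calc sInf SetE ≤ norm2 (Y *ᵥ u) := csInf_le hbddE ⟨u, huE, hu1, rfl⟩
    _ ≤ norm2 (Y *ᵥ v) := hYu
  · have hker : ∃ w : E, w ≠ 0 ∧ ψ w = 0 := by
      by_contra hcon
      push_neg at hcon
      apply hinj
      apply (injective_iff_map_eq_zero ψ).2
      intro a ha
      by_contra ha0
      exact (hcon a ha0) ha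
    obtain ⟨w, hw0, hwker⟩ := hker
    have hPVw : PV *ᵥ (w : Fin d → ℝ) = 0 := congrArg Subtype.val hwker
    have hYw : Y *ᵥ (w : Fin d → ℝ) = 0 := by
      rw [← hYPV, ← Matrix.mulVec_mulVec, hPVw, Matrix.mulVec_zero]
    have hwne : (w : Fin d → ℝ) ≠ 0 := fun h => hw0 (Subtype.ext h)
    have hpos := norm2_pos hwne
    set u : Fin d → ℝ := (norm2 (w : Fin d → ℝ))⁻¹ • (w : Fin d → ℝ) with hu
    have huE : u ∈ E := E.smul_mem _ w.2
    have hu1 : norm2 u = 1 := by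
      rw [hu, norm2_smul, abs_inv, abs_of_pos hpos, inv_mul_cancel₀ hpos.ne']
    have hYu : norm2 (Y *ᵥ u) = 0 := by
      rw [hu, Matrix.mulVec_smul, hYw, smul_zero, norm2_eq_zero_iff.2 rfl]
    calc sInf SetE ≤ norm2 (Y *ᵥ u) := csInf_le hbddE ⟨u, huE, hu1, rfl⟩
    _ = 0 := hYu
    _ ≤ sInf SetU := hs₀_nonneg

end Aux

/-- Spectral (operator) norm of a real matrix. -/
def specNorm {I : Type*} [Fintype I] {d : ℕ} (A : Matrix I (Fin d) ℝ) : ℝ :=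
  sSup {s | ∃ v : Fin d → ℝ, norm2 v = 1 ∧ s = norm2 (A.mulVec v)}

/-- `singVal A k` is the `k`-th largest singular value of `A` (1-based),
via the Courant–Fischer min-max principle. -/
def singVal {I : Type*} [Fintype I] {d : ℕ} (A : Matrix I (Fin d) ℝ) (k : ℕ) : ℝ :=
  sSup {r | ∃ E : Submodule ℝ (Fin d → ℝ), Module.finrank ℝ E = k ∧
    r = sInf {s | ∃ v ∈ E, norm2 v = 1 ∧ s = norm2 (A.mulVec v)}}

/-- `P` is a `d × d` orthogonal projection matrix of rank `k`. -/
def IsProjOfRank {d : ℕ} (P : Matrix (Fin d) (Fin d) ℝ) (k : ℕ) : Prop :=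
  P.transpose = P ∧ P * P = P ∧ P.rank = k

/-- `P` is an orthogonal projection onto a top-`k` right-singular (row) subspace of `A`:
it is a rank-`k` orthogonal projection maximizing `‖A P'‖_F` among rank-`k` projections. -/
def IsTopKProj {I : Type*} [Fintype I] {d : ℕ} (A : Matrix I (Fin d) ℝ) (k : ℕ)
    (P : Matrix (Fin d) (Fin d) ℝ) : Prop :=
  IsProjOfRank P k ∧ ∀ P', IsProjOfRank P' k → frobNorm (A * P') ≤ frobNorm (A * P)

set_option maxHeartbeats 2000000 in
/-- Frobenius-norm perturbation bound for the top-`k` right singular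
subspace, when `X = Y + Z`, `Y` has rank `k`, and the row space of `Y` is
orthogonal to the row space of `Z` (i.e. `Y Zᵀ = 0`). -/
theorem stmt4 (n d k : ℕ) (X Y Z : Matrix (Fin n) (Fin d) ℝ)
    (PV PVhat : Matrix (Fin d) (Fin d) ℝ)
    (hXYZ : X = Y + Z) (hrank : Y.rank = k) (horth : Y * Z.transpose = 0)
    (hPV : IsTopKProj Y k PV) (hPVhat : IsTopKProj X k PVhat)
    (hgap : 2 * specNorm Z ^ 2 ≤ singVal Y k ^ 2) :
    frobNorm (PV - PVhat) ≤ 2 * Real.sqrt 2 * frobNorm Z / singVal Y k := by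
  classical
  open Aux Matrix in
  obtain ⟨⟨hPVt, hPVi, hPVr⟩, hPVopt⟩ := hPV
  obtain ⟨⟨hQt, hQi, hQr⟩, hQopt⟩ := hPVhat
  -- singVal is always nonnegative
  have hsing_nonneg : 0 ≤ singVal Y k := by
    apply Real.sSup_nonneg
    rintro r ⟨E, hE, rfl⟩
    apply Real.sInf_nonneg
    rintro s ⟨v, hv, hv1, rfl⟩
    exact norm2_nonneg _
  rcases Nat.eq_zero_or_pos k with hk0 | hkpos
  · -- degenerate case k = 0 : both projections are zero
    subst hk0
    have hzero : ∀ (P : Matrix (Fin d) (Fin d) ℝ), P.rank = 0 → P = 0 := by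
      intro P hP
      have hbot : LinearMap.range P.mulVecLin = ⊥ := by
        rw [← Submodule.finrank_eq_zero (R := ℝ)]
        exact hP
      apply matrix_ext_of_mulVec
      intro v
      have : P.mulVecLin v ∈ (⊥ : Submodule ℝ (Fin d → ℝ)) := hbot ▸ LinearMap.mem_range_self _ v
      simpa [Matrix.mulVecLin_apply, Matrix.zero_mulVec] using this
    rw [hzero PV hPVr, hzero PVhat hQr, sub_zero]
    have h0 : frobNorm (0 : Matrix (Fin d) (Fin d) ℝ) = 0 := by
      simp [frobNorm]
    rw [h0]
    apply div_nonneg _ hsing_nonneg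
    have := frobNorm_nonneg Z
    positivity
  -- Main case : k ≥ 1.
  -- U is the row space of Y
  set U : Submodule ℝ (Fin d → ℝ) := LinearMap.range (Yᵀ).mulVecLin with hU
  have hUfin : Module.finrank ℝ U = k := by
    have h1 : (Yᵀ).rank = k := by rw [Matrix.rank_transpose]; exact hrank
    exact h1
  have hrowY : ∀ i, Y i ∈ U := by
    intro i
    exact ⟨Pi.single i 1, by rw [Matrix.mulVecLin_apply, Matrix.mulVec_single_one]; rfl⟩
  -- the row-space projection is a rank-k projection with Y * Q = Y
  have hQrproj : IsProjOfRank (projMat U) k :=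
    ⟨projMat_transpose U, projMat_idem U, by rw [projMat_rank]; exact hUfin⟩
  have hYQr : Y * projMat U = Y := by
    ext i j
    have h1 : (Y * projMat U) i j = ((projMat U)ᵀ *ᵥ (Y i)) j := by
      simp [Matrix.mul_apply, Matrix.mulVec, dotProduct, Matrix.transpose_apply, mul_comm]
    rw [h1, projMat_transpose, projMat_mulVec, projL_id U (hrowY i)]
  -- optimality of PV forces Y * PV = Y
  have hYPV : Y * PV = Y := by
    have h1 : frobNorm (Y * projMat U) ≤ frobNorm (Y * PV) := hPVopt _ hQrproj
    have h2 : F2 (Y * PV) ≤ F2 Y := F2_mul_le Y hPVt hPVi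
    have h3 : F2 Y ≤ F2 (Y * PV) := by
      have := F2_le_of_frob h1
      rwa [hYQr] at this
    have h4 := pyth Y hPVt hPVi
    have h5 : F2 (Y - Y * PV) = 0 := by linarith
    have h6 := F2_eq_zero h5
    have h7 : Y - Y * PV = 0 := h6
    rw [sub_eq_zero] at h7
    exact h7.symm
  have hPVYt : PV * Yᵀ = Yᵀ := by
    have h1 : (Y * PV)ᵀ = Yᵀ := by rw [hYPV]
    rw [Matrix.transpose_mul, hPVt] at h1
    exact h1
  -- range of PV equals U
  have hUV : U = LinearMap.range PV.mulVecLin := by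
    apply Submodule.eq_of_le_of_finrank_le
    · rintro x ⟨a, rfl⟩
      refine ⟨(Yᵀ).mulVec a, ?_⟩
      rw [Matrix.mulVecLin_apply, Matrix.mulVecLin_apply, Matrix.mulVec_mulVec, hPVYt]
    · rw [hUfin]
      exact le_of_eq hPVr
  have hPVmem : ∀ v, PV *ᵥ v ∈ U := by
    intro v
    rw [hUV]
    exact ⟨v, rfl⟩
  -- the singular value set over U
  set SetU : Set ℝ := {s | ∃ v ∈ U, norm2 v = 1 ∧ s = norm2 (Y *ᵥ v)} with hSetU
  set s₀ : ℝ := sInf SetU with hs₀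
  have hbddU : BddBelow SetU := ⟨0, by rintro s ⟨v, _, _, rfl⟩; exact norm2_nonneg _⟩
  -- a unit vector in U
  have hUnit : ∃ v ∈ U, norm2 v = 1 := by
    have hne : U ≠ ⊥ := by
      intro h
      rw [h] at hUfin
      rw [finrank_bot] at hUfin
      omega
    obtain ⟨v, hvU, hv0⟩ := Submodule.exists_mem_ne_zero_of_ne_bot hne
    refine ⟨(norm2 v)⁻¹ • v, U.smul_mem _ hvU, ?_⟩
    rw [norm2_smul, abs_inv, abs_of_pos (norm2_pos hv0), inv_mul_cancel₀ (norm2_pos hv0).ne']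
  obtain ⟨u₁, hu₁U, hu₁⟩ := hUnit
  have hSetU_ne : SetU.Nonempty := ⟨norm2 (Y *ᵥ u₁), u₁, hu₁U, hu₁, rfl⟩
  have hs₀_nonneg : 0 ≤ s₀ := by
    apply Real.sInf_nonneg
    rintro s ⟨v, _, _, rfl⟩
    exact norm2_nonneg _
  have hkey1 : ∀ v ∈ U, norm2 v = 1 → s₀ ≤ norm2 (Y *ᵥ v) := by
    intro v hvU hv1
    exact csInf_le hbddU ⟨v, hvU, hv1, rfl⟩
  have hkey2 : ∀ c ∈ U, s₀ * norm2 c ≤ norm2 (Y *ᵥ c) := by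
    intro c hcU
    rcases eq_or_ne c 0 with rfl | hc0
    · rw [Matrix.mulVec_zero, norm2_eq_zero_iff.2 rfl, mul_zero]
      exact norm2_nonneg _
    · have hpos := norm2_pos hc0
      have humem : (norm2 c)⁻¹ • c ∈ U := U.smul_mem _ hcU
      have hu1 : norm2 ((norm2 c)⁻¹ • c) = 1 := by
        rw [norm2_smul, abs_inv, abs_of_pos hpos, inv_mul_cancel₀ hpos.ne']
      have h := hkey1 _ humem hu1
      rw [Matrix.mulVec_smul, norm2_smul, abs_inv, abs_of_pos hpos] at h
      have h2 := mul_le_mul_of_nonneg_right h hpos.le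
      calc s₀ * norm2 c ≤ (norm2 c)⁻¹ * norm2 (Y *ᵥ c) * norm2 c := h2
      _ = norm2 (Y *ᵥ c) := by field_simp
  -- positivity of s₀
  have hYne : ∀ v ∈ U, v ≠ 0 → Y *ᵥ v ≠ 0 := by
    rintro v ⟨a, rfl⟩ hv0 hYv
    apply hv0
    have hdp : (Yᵀ).mulVec a ⬝ᵥ (Yᵀ).mulVec a = 0 := by
      rw [dp_mulVec_left, Matrix.transpose_transpose]
      rw [show ((Yᵀ).mulVecLin a : Fin d → ℝ) = (Yᵀ) *ᵥ a from rfl] at hYv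
      rw [hYv, dotProduct_zero]
    have h2 : norm2 ((Yᵀ).mulVec a) = 0 := by
      rw [norm2_eq_sqrt_dp, hdp, Real.sqrt_zero]
    exact norm2_eq_zero_iff.1 h2
  have hs₀_pos : 0 < s₀ := by
    obtain ⟨v₀, hv₀U, hv₀1, hmin⟩ := exists_min_unit U Y ⟨u₁, hu₁U, hu₁⟩
    have hv₀ne : v₀ ≠ 0 := by
      intro h0
      rw [h0, norm2_eq_zero_iff.2 rfl] at hv₀1
      exact one_ne_zero hv₀1.symm
    have hv₀pos : 0 < norm2 (Y *ᵥ v₀) := norm2_pos (hYne v₀ hv₀U hv₀ne)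
    have hge : norm2 (Y *ᵥ v₀) ≤ s₀ := by
      apply le_csInf hSetU_ne
      rintro b ⟨v, hvU, hv1, rfl⟩
      exact hmin v hvU hv1
    linarith
  -- Courant–Fischer : singVal Y k = s₀
  have hsing : singVal Y k = s₀ := by
    have hmem : s₀ ∈ {r | ∃ E : Submodule ℝ (Fin d → ℝ), Module.finrank ℝ E = k ∧
        r = sInf {s | ∃ v ∈ E, norm2 v = 1 ∧ s = norm2 (Y.mulVec v)}} := ⟨U, hUfin, rfl⟩
    have hub : ∀ r ∈ {r | ∃ E : Submodule ℝ (Fin d → ℝ), Module.finrank ℝ E = k ∧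
        r = sInf {s | ∃ v ∈ E, norm2 v = 1 ∧ s = norm2 (Y.mulVec v)}}, r ≤ s₀ := by
      rintro r ⟨E, hEfin, rfl⟩
      exact courant_aux Y PV hPVt hPVi hYPV U hPVmem hUfin hSetU_ne hs₀_nonneg E hEfin
    rw [singVal]
    exact le_antisymm (csSup_le ⟨s₀, hmem⟩ hub) (le_csSup ⟨s₀, hub⟩ hmem)
  -- the final chain of inequalities
  set A1 : Matrix (Fin d) (Fin d) ℝ := 1 - PVhat with hA1
  have hA1t : A1ᵀ = A1 := by rw [hA1, Matrix.transpose_sub, Matrix.transpose_one, hQt]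
  have hA1i : A1 * A1 = A1 := by
    rw [hA1, Matrix.sub_mul, Matrix.one_mul, Matrix.mul_sub, Matrix.mul_one, hQi]
    abel
  have hXA1 : F2 (X * A1) ≤ F2 Z := by
    have h1 : frobNorm (X * PV) ≤ frobNorm (X * PVhat) := hQopt PV ⟨hPVt, hPVi, hPVr⟩
    have h2 := pyth X hQt hQi
    have h3 := pyth X hPVt hPVi
    have h4 : F2 (X * PV) ≤ F2 (X * PVhat) := F2_le_of_frob h1
    have h5 : F2 (X - X * PVhat) ≤ F2 (X - X * PV) := by linarith
    have h6 : X - X * PV = Z - Z * PV := by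
      rw [hXYZ, Matrix.add_mul, hYPV]; abel
    have h7 : F2 (Z - Z * PV) ≤ F2 Z := by
      have h71 := pyth Z hPVt hPVi
      have h72 := F2_nonneg (Z * PV)
      linarith
    have h8 : X * A1 = X - X * PVhat := by rw [hA1, Matrix.mul_sub, Matrix.mul_one]
    rw [h8]
    rw [h6] at h5
    linarith
  have hZA1 : F2 (Z * A1) ≤ F2 Z := F2_mul_le Z hA1t hA1i
  have hYA1 : frobNorm (Y * A1) ≤ 2 * frobNorm Z := by
    have h9 : Y * A1 = X * A1 + -(Z * A1) := by
      rw [hXYZ, Matrix.add_mul]; abel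
    calc frobNorm (Y * A1) = frobNorm (X * A1 + -(Z * A1)) := by rw [h9]
    _ ≤ frobNorm (X * A1) + frobNorm (-(Z * A1)) := frob_triangle _ _
    _ = frobNorm (X * A1) + frobNorm (Z * A1) := by rw [frob_neg]
    _ ≤ frobNorm Z + frobNorm Z := add_le_add (frob_mono hXA1) (frob_mono hZA1)
    _ = 2 * frobNorm Z := by ring
  have hcol : s₀^2 * F2 (PV * A1) ≤ F2 (Y * (PV * A1)) := by
    rw [F2_eq_sum_cols (PV * A1), F2_eq_sum_cols (Y * (PV * A1)), Finset.mul_sum]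
    apply Finset.sum_le_sum
    intro j _
    have hc : (fun i => (PV * A1) i j) = PV *ᵥ (fun l => A1 l j) := by
      funext i; simp [Matrix.mul_apply, Matrix.mulVec, dotProduct]
    have hcY : (fun i => (Y * (PV * A1)) i j) = Y *ᵥ (fun i => (PV * A1) i j) := by
      funext i; simp [Matrix.mul_apply, Matrix.mulVec, dotProduct]
    have hmem2 : (fun i => (PV * A1) i j) ∈ U := by rw [hc]; exact hPVmem _
    have hk2 := hkey2 _ hmem2
    rw [hcY]
    have hsq := mul_self_le_mul_self
      (mul_nonneg hs₀_nonneg (norm2_nonneg (fun i => (PV * A1) i j))) hk2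
    nlinarith [hsq]
  have hassoc : Y * (PV * A1) = Y * A1 := by rw [← Matrix.mul_assoc, hYPV]
  have hkeyF : s₀ * Real.sqrt (F2 (PV * A1)) ≤ 2 * frobNorm Z := by
    have h10 : F2 (Y * A1) ≤ (2 * frobNorm Z)^2 := by
      rw [← frobNorm_sq]
      nlinarith [frobNorm_nonneg (Y * A1), hYA1]
    have h11 : s₀^2 * F2 (PV * A1) ≤ (2 * frobNorm Z)^2 := by
      rw [hassoc] at hcol; linarith
    have h12 : (s₀ * Real.sqrt (F2 (PV * A1)))^2 ≤ (2 * frobNorm Z)^2 := by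
      rw [mul_pow, Real.sq_sqrt (F2_nonneg _)]; exact h11
    have h13 : (0:ℝ) ≤ 2 * frobNorm Z := by have := frobNorm_nonneg Z; linarith
    nlinarith [mul_nonneg hs₀_nonneg (Real.sqrt_nonneg (F2 (PV * A1)))]
  -- trace identity : ‖PV - PVhat‖²_F = 2 ‖PV (1 - PVhat)‖²_F
  have htrPV : Matrix.trace PV = (k:ℝ) := by rw [trace_eq_rank hPVi, hPVr]
  have htrQ : Matrix.trace PVhat = (k:ℝ) := by rw [trace_eq_rank hQi, hQr]
  have hF2diff : F2 (PV - PVhat) = 2 * F2 (PV * A1) := by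
    have e1 : (PV - PVhat) * (PV - PVhat)ᵀ
        = PV - PV * PVhat - PVhat * PV + PVhat := by
      rw [Matrix.transpose_sub, hPVt, hQt, Matrix.sub_mul, Matrix.mul_sub, Matrix.mul_sub,
        hPVi, hQi]
      abel
    have e2 : (PV * A1) * (PV * A1)ᵀ = (PV * A1) * PV := by
      rw [Matrix.transpose_mul, hA1t, hPVt]
      have e21 : A1 * (A1 * PV) = A1 * PV := by rw [← Matrix.mul_assoc, hA1i]
      rw [Matrix.mul_assoc PV A1 (A1 * PV), e21, ← Matrix.mul_assoc]
    have e4 : F2 (PV * A1) = Matrix.trace PV - Matrix.trace (PV * PVhat) := by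
      rw [F2_eq_trace, e2, Matrix.trace_mul_comm (PV * A1) PV, ← Matrix.mul_assoc, hPVi,
        hA1, Matrix.mul_sub, Matrix.mul_one, Matrix.trace_sub]
    have e5 : F2 (PV - PVhat)
        = Matrix.trace PV + Matrix.trace PVhat - 2 * Matrix.trace (PV * PVhat) := by
      rw [F2_eq_trace, e1, Matrix.trace_add, Matrix.trace_sub, Matrix.trace_sub,
        Matrix.trace_mul_comm PVhat PV]
      ring
    rw [e4, e5, htrPV, htrQ]
    ring
  -- conclusion
  rw [hsing]
  have hc2 := F2_nonneg (PV * A1)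
  calc frobNorm (PV - PVhat) = Real.sqrt (2 * F2 (PV * A1)) := by rw [frobNorm_eq, hF2diff]
  _ = Real.sqrt 2 * Real.sqrt (F2 (PV * A1)) := Real.sqrt_mul (by norm_num) _
  _ ≤ Real.sqrt 2 * (2 * frobNorm Z / s₀) := by
      apply mul_le_mul_of_nonneg_left _ (Real.sqrt_nonneg 2)
      rw [le_div_iff₀ hs₀_pos, mul_comm]
      exact hkeyF
  _ = 2 * Real.sqrt 2 * frobNorm Z / s₀ := by ring
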